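/- Let Γ be a Fuchsian group (a discrete subgroup of PSL(2,ℝ)) acting on the upper half-plane ℍ, let π : ℍ → X = Γ\ℍ be the quotient map onto the space of Γ-orbits, and let M ∈ PSL(2,ℝ) with M ∉ Γ. Set Γ^M = M⁻¹ΓM and G = Γ ∩ Γ^M. Suppose X₀ is an uncountable subset of X, and define N = sup_{x ∈ X₀} #{π(Mτ) : τ ∈ π⁻¹(x)}. Then N is finite if and only if the index |Γ : G| is finite, and in that case N = |Γ : G|. -/

import Mathlib

open scoped MatrixGroups
open UpperHalfPlane Matrix

/-- Every element of the center of `SL(2, ℝ)` acts trivially on the upper half-plane. -/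
theorem center_smul_trivial (A : Matrix.SpecialLinearGroup (Fin 2) ℝ)
    (hA : A ∈ Subgroup.center (Matrix.SpecialLinearGroup (Fin 2) ℝ)) (z : ℍ) : A • z = z := by
  obtain ⟨r, hr, hrA⟩ := Matrix.SpecialLinearGroup.mem_center_iff.mp hA
  have hr0 : (r : ℂ) ≠ 0 := by
    intro h
    rw [show r = (0:ℝ) from by exact_mod_cast h] at hr
    norm_num at hr
  have h00 : (A : Matrix (Fin 2) (Fin 2) ℝ) 0 0 = r := by rw [← hrA]; simp
  have h01 : (A : Matrix (Fin 2) (Fin 2) ℝ) 0 1 = 0 := by rw [← hrA]; simp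
  have h10 : (A : Matrix (Fin 2) (Fin 2) ℝ) 1 0 = 0 := by rw [← hrA]; simp
  have h11 : (A : Matrix (Fin 2) (Fin 2) ℝ) 1 1 = r := by rw [← hrA]; simp
  ext
  rw [UpperHalfPlane.specialLinearGroup_apply]
  simp only [UpperHalfPlane.coe_mk, h00, h01, h10, h11, map_zero, Complex.ofReal_zero,
    zero_mul, add_zero, zero_add, Algebra.algebraMap_self, RingHom.id_apply]
  field_simp

/-- The action of `PSL(2, ℝ) = SL(2, ℝ)/{±I}` on the upper half-plane by Möbius
transformations, descended from the action of `SL(2, ℝ)`. -/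
noncomputable instance PSL.mulActionUpperHalfPlane : MulAction PSL(2, ℝ) ℍ :=
  MulAction.compHom ℍ <|
    QuotientGroup.lift (Subgroup.center _)
      (MulAction.toPermHom (Matrix.SpecialLinearGroup (Fin 2) ℝ) ℍ)
      (fun A hA => Equiv.ext fun z => center_smul_trivial A hA z)

/-- The topology on `SL(2, ℝ)` (as a subspace of the space of matrices). -/
noncomputable instance : TopologicalSpace (Matrix.SpecialLinearGroup (Fin 2) ℝ) :=
  instTopologicalSpaceSubtype

/- auxiliary instances -/
instance SL2R.secondCountableMatrix : SecondCountableTopology (Matrix (Fin 2) (Fin 2) ℝ) :=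
  inferInstanceAs (SecondCountableTopology ((Fin 2) → (Fin 2) → ℝ))

instance SL2R.secondCountable : SecondCountableTopology (Matrix.SpecialLinearGroup (Fin 2) ℝ) :=
  TopologicalSpace.secondCountableTopology_induced _ _ Subtype.val

instance SL2R.continuousMul : ContinuousMul (Matrix.SpecialLinearGroup (Fin 2) ℝ) := by
  constructor
  apply continuous_induced_rng.mpr
  exact ((continuous_subtype_val.comp continuous_fst).mul
    (continuous_subtype_val.comp continuous_snd))

theorem PSL.fix_countable (g : PSL(2, ℝ)) (hg : g ≠ 1) :
    Set.Countable {τ : ℍ | g • τ = τ} := by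
  obtain ⟨A, rfl⟩ := QuotientGroup.mk_surjective g
  have hA : A ∉ Subgroup.center (Matrix.SpecialLinearGroup (Fin 2) ℝ) := by
    intro h; exact hg ((QuotientGroup.eq_one_iff A).mpr h)
  set a := (A : Matrix (Fin 2) (Fin 2) ℝ) 0 0 with ha
  set b := (A : Matrix (Fin 2) (Fin 2) ℝ) 0 1 with hb
  set c := (A : Matrix (Fin 2) (Fin 2) ℝ) 1 0 with hc
  set d := (A : Matrix (Fin 2) (Fin 2) ℝ) 1 1 with hd
  have hdet : a * d - b * c = 1 := by
    have := A.property
    rwa [Matrix.det_fin_two] at this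
  set p : Polynomial ℂ :=
    Polynomial.C (c:ℂ) * Polynomial.X ^ 2 + Polynomial.C ((d:ℂ) - a) * Polynomial.X
      - Polynomial.C (b:ℂ) with hp
  have hp0 : p ≠ 0 := by
    intro h
    apply hA
    have h2 : (c:ℂ) = 0 := by
      have := congrArg (fun q => Polynomial.coeff q 2) h
      simpa [hp] using this
    have h1 : (d:ℂ) - a = 0 := by
      have := congrArg (fun q => Polynomial.coeff q 1) h
      simpa [hp] using this
    have h0 : (b:ℂ) = 0 := by
      have := congrArg (fun q => Polynomial.coeff q 0) h
      simpa [hp] using this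
    have hc0 : c = 0 := by exact_mod_cast h2
    have hb0 : b = 0 := by exact_mod_cast h0
    have hda : d = a := by
      have : (d:ℂ) = a := by linear_combination h1
      exact_mod_cast this
    refine Matrix.SpecialLinearGroup.mem_center_iff.mpr ⟨a, ?_, ?_⟩
    · have : a * a = 1 := by simpa [hda, hc0] using hdet
      simpa [sq] using this
    · ext i j
      fin_cases i <;> fin_cases j <;>
        simp [Matrix.scalar_apply, Matrix.diagonal_apply, ← ha, ← hb, ← hc, ← hd, hb0, hc0, hda]
  have hsub : {τ : ℍ | (QuotientGroup.mk A : PSL(2, ℝ)) • τ = τ} ⊆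
      (fun τ : ℍ => (τ : ℂ)) ⁻¹' {z : ℂ | p.IsRoot z} := by
    intro τ hτ
    have hAτ : A • τ = τ := hτ
    have hden : (c:ℂ) * τ + d ≠ 0 := by
      intro h
      have him : c * (τ:ℂ).im = 0 := by
        have := congrArg Complex.im h
        simpa using this
      have hc0 : c = 0 := by
        rcases mul_eq_zero.mp him with h' | h'
        · exact h'
        · exact absurd h' (ne_of_gt τ.im_pos)
      have hd0 : d = 0 := by
        have := congrArg Complex.re h
        simp [hc0] at this
        exact_mod_cast this
      rw [hc0, hd0] at hdet; simp at hdet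
    have hco : ((a:ℂ) * τ + b) / ((c:ℂ) * τ + d) = τ := by
      have := congrArg (fun z : ℍ => (z : ℂ)) hAτ
      rw [UpperHalfPlane.specialLinearGroup_apply] at this
      simpa [← ha, ← hb, ← hc, ← hd] using this
    have key : (a:ℂ) * τ + b = τ * ((c:ℂ) * τ + d) := by
      rw [div_eq_iff hden] at hco
      linear_combination hco
    show p.IsRoot (τ : ℂ)
    simp only [hp, Polynomial.IsRoot, Polynomial.eval_add, Polynomial.eval_sub,
      Polynomial.eval_mul, Polynomial.eval_pow, Polynomial.eval_C, Polynomial.eval_X]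
    linear_combination -key
  have hfin : ((fun τ : ℍ => (τ : ℂ)) ⁻¹' {z : ℂ | p.IsRoot z}).Finite :=
    Set.Finite.preimage (Set.injOn_of_injective (fun x y h => UpperHalfPlane.ext h))
      (Polynomial.finite_setOf_isRoot hp0)
  exact Set.Countable.mono hsub hfin.countable

set_option maxHeartbeats 2000000 in
/-- Main lemma: for a Fuchsian group `Γ` (a discrete subgroup of `PSL(2, ℝ)`), an element
`M ∈ PSL(2, ℝ) ∖ Γ`, `G = Γ ∩ M⁻¹ΓM`, and an uncountable subset `X₀` of the orbit space
`X = Γ\ℍ`, the quantity `N = sup_{x ∈ X₀} #{π(Mτ) : τ ∈ π⁻¹(x)}` (where `π : ℍ → X` is the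
canonical projection) is finite if and only if the index `|Γ : G|` is finite, in which case
`N = |Γ : G|`. -/
theorem finiteness_criterion_fuchsian
    (Γ : Subgroup PSL(2, ℝ)) [DiscreteTopology Γ]
    (M : PSL(2, ℝ)) (hM : M ∉ Γ)
    (G : Subgroup PSL(2, ℝ)) (hG : G = Γ ⊓ Subgroup.map (MulAut.conj M⁻¹).toMonoidHom Γ)
    (π : ℍ → Quotient (MulAction.orbitRel Γ ℍ))
    (hπ : π = Quotient.mk (MulAction.orbitRel Γ ℍ))
    (X₀ : Set (Quotient (MulAction.orbitRel Γ ℍ))) (hX₀ : ¬ X₀.Countable)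
    (N : ℕ∞) (hN : N = ⨆ x ∈ X₀, ((fun τ : ℍ => π (M • τ)) '' (π ⁻¹' {x})).encard) :
    (N ≠ ⊤ ↔ G.relIndex Γ ≠ 0) ∧ (N ≠ ⊤ → N = (G.relIndex Γ : ℕ∞)) := by
  have hcount : Countable Γ :=
    (TopologicalSpace.separableSpace_iff_countable).mp inferInstance
  subst hπ hN hG
  set S := (Γ ⊓ Subgroup.map (MulAut.conj M⁻¹).toMonoidHom Γ).subgroupOf Γ with hS
  -- membership in S
  have hmemS : ∀ g : ↥Γ, g ∈ S ↔ ∃ δ : PSL(2, ℝ), δ ∈ Γ ∧ M⁻¹ * δ * M = (g : PSL(2, ℝ)) := by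
    intro g
    rw [hS, Subgroup.mem_subgroupOf]
    simp only [Subgroup.mem_inf, Subgroup.mem_map, MulEquiv.coe_toMonoidHom, MulAut.conj_apply,
      inv_inv]
    constructor
    · rintro ⟨-, δ, hδ, hδ2⟩; exact ⟨δ, hδ, hδ2⟩
    · rintro ⟨δ, hδ, hδ2⟩; exact ⟨g.2, δ, hδ, hδ2⟩
  -- the function on the coset space
  have wd : ∀ (τ₀ : ℍ) (γ₁ γ₂ : ↥Γ), (QuotientGroup.leftRel S) γ₁ γ₂ →
      (Quotient.mk (MulAction.orbitRel Γ ℍ) (M • ((γ₁ : PSL(2, ℝ))⁻¹ • τ₀)) =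
       Quotient.mk (MulAction.orbitRel Γ ℍ) (M • ((γ₂ : PSL(2, ℝ))⁻¹ • τ₀))) := by
    intro τ₀ γ₁ γ₂ h
    have h' : γ₁⁻¹ * γ₂ ∈ S := QuotientGroup.leftRel_apply.mp h
    obtain ⟨δ, hδΓ, hδ⟩ := (hmemS _).mp h'
    rw [Subgroup.coe_mul, Subgroup.coe_inv] at hδ
    refine Quotient.sound (MulAction.orbitRel_apply.mpr
      (MulAction.mem_orbit_iff.mpr ⟨⟨δ, hδΓ⟩, ?_⟩))
    show δ • (M • ((γ₂ : PSL(2, ℝ))⁻¹ • τ₀)) = M • ((γ₁ : PSL(2, ℝ))⁻¹ • τ₀)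
    rw [smul_smul, smul_smul, smul_smul]
    congr 1
    have hδ' : δ = M * ((γ₁ : PSL(2, ℝ))⁻¹ * (γ₂ : PSL(2, ℝ))) * M⁻¹ := by
      rw [← hδ]; group
    rw [hδ']; group
  classical
  let F : ℍ → (↥Γ ⧸ S) → Quotient (MulAction.orbitRel Γ ℍ) := fun τ₀ =>
    Quotient.lift (fun γ : ↥Γ => Quotient.mk (MulAction.orbitRel Γ ℍ)
      (M • ((γ : PSL(2, ℝ))⁻¹ • τ₀))) (wd τ₀)
  -- range of F equals the image set
  have hrange : ∀ τ₀ : ℍ,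
      Set.range (F τ₀) =
        (fun τ : ℍ => Quotient.mk (MulAction.orbitRel Γ ℍ) (M • τ)) ''
          (Quotient.mk (MulAction.orbitRel Γ ℍ) ⁻¹' {Quotient.mk (MulAction.orbitRel Γ ℍ) τ₀}) := by
    intro τ₀
    ext y
    constructor
    · rintro ⟨q, rfl⟩
      induction q using Quotient.inductionOn with
      | h γ =>
        refine ⟨(γ : PSL(2, ℝ))⁻¹ • τ₀, ?_, rfl⟩
        show Quotient.mk (MulAction.orbitRel Γ ℍ) ((γ : PSL(2, ℝ))⁻¹ • τ₀) =
          Quotient.mk (MulAction.orbitRel Γ ℍ) τ₀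
        exact Quotient.sound (MulAction.orbitRel_apply.mpr
          (MulAction.mem_orbit_iff.mpr ⟨γ⁻¹, rfl⟩))
    · rintro ⟨τ, hτ, rfl⟩
      have hτ' := MulAction.orbitRel_apply.mp (Quotient.exact hτ)
      obtain ⟨γ, hγ⟩ := MulAction.mem_orbit_iff.mp hτ'
      refine ⟨Quotient.mk _ γ⁻¹, ?_⟩
      show Quotient.mk (MulAction.orbitRel Γ ℍ) (M • (((γ⁻¹ : ↥Γ) : PSL(2, ℝ))⁻¹ • τ₀)) =
        Quotient.mk (MulAction.orbitRel Γ ℍ) (M • τ)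
      rw [← hγ, Subgroup.smul_def]
      congr 2
      simp
  -- cardinality bound
  have hub : ∀ x : Quotient (MulAction.orbitRel Γ ℍ),
      ((fun τ : ℍ => Quotient.mk (MulAction.orbitRel Γ ℍ) (M • τ)) ''
        (Quotient.mk (MulAction.orbitRel Γ ℍ) ⁻¹' {x})).encard ≤ ENat.card (↥Γ ⧸ S) := by
    intro x
    obtain ⟨τ₀, rfl⟩ := Quotient.exists_rep x
    rw [← hrange τ₀, ← Set.image_univ]
    calc ((F τ₀) '' Set.univ).encard ≤ (Set.univ : Set (↥Γ ⧸ S)).encard :=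
          Set.encard_image_le _ _
      _ = ENat.card (↥Γ ⧸ S) := by rw [Set.encard_univ]
  -- bad set
  set Bad : Set ℍ := ⋃ t : ↥Γ × ↥Γ × ↥Γ,
      {τ : ℍ | ((t.1 : PSL(2, ℝ)) * M⁻¹ * t.2.1 * M * (t.2.2 : PSL(2, ℝ))⁻¹) • τ = τ ∧
        ((t.1 : PSL(2, ℝ)) * M⁻¹ * t.2.1 * M * (t.2.2 : PSL(2, ℝ))⁻¹) ≠ 1} with hBad
  have hBadc : Bad.Countable := by
    refine Set.countable_iUnion fun t => ?_
    by_cases h1 : ((t.1 : PSL(2, ℝ)) * M⁻¹ * t.2.1 * M * (t.2.2 : PSL(2, ℝ))⁻¹) = 1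
    · convert Set.countable_empty
      ext τ; simp [h1]
    · exact Set.Countable.mono (fun τ hτ => hτ.1) (PSL.fix_countable _ h1)
  -- pick a good point of X₀
  obtain ⟨x, hxX₀, hxBad⟩ := Set.not_subset.mp
    (fun h => hX₀ ((hBadc.image (Quotient.mk (MulAction.orbitRel Γ ℍ))).mono h))
  obtain ⟨τ₀, hτ₀⟩ := Quotient.exists_rep x
  have hgood : ∀ γ₁ δ γ₂ : ↥Γ,
      (((γ₁ : PSL(2, ℝ)) * M⁻¹ * δ * M * (γ₂ : PSL(2, ℝ))⁻¹) • τ₀ = τ₀) →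
      ((γ₁ : PSL(2, ℝ)) * M⁻¹ * δ * M * (γ₂ : PSL(2, ℝ))⁻¹) = 1 := by
    intro γ₁ δ γ₂ hfix
    by_contra h1
    exact hxBad ⟨τ₀, Set.mem_iUnion.mpr ⟨(γ₁, δ, γ₂), hfix, h1⟩, hτ₀⟩
  -- F τ₀ injective
  have hinj : Function.Injective (F τ₀) := by
    intro q₁ q₂ h
    induction q₁ using Quotient.inductionOn with
    | h γ₁ =>
    induction q₂ using Quotient.inductionOn with
    | h γ₂ =>
    have h' : Quotient.mk (MulAction.orbitRel Γ ℍ) (M • ((γ₁ : PSL(2, ℝ))⁻¹ • τ₀)) =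
        Quotient.mk (MulAction.orbitRel Γ ℍ) (M • ((γ₂ : PSL(2, ℝ))⁻¹ • τ₀)) := h
    have h'' := MulAction.orbitRel_apply.mp (Quotient.exact h')
    obtain ⟨δ, hδ⟩ := MulAction.mem_orbit_iff.mp h''
    have hδ' : ((δ : PSL(2, ℝ))) • (M • ((γ₂ : PSL(2, ℝ))⁻¹ • τ₀)) =
        M • ((γ₁ : PSL(2, ℝ))⁻¹ • τ₀) := hδ
    simp only [smul_smul] at hδ'
    have hfix : (((γ₁ : PSL(2, ℝ)) * M⁻¹ * δ * M * (γ₂ : PSL(2, ℝ))⁻¹) • τ₀ = τ₀) := by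
      have h2 := congrArg (fun τ : ℍ => ((γ₁ : PSL(2, ℝ)) * M⁻¹) • τ) hδ'
      simp only [smul_smul] at h2
      have e1 : (γ₁ : PSL(2, ℝ)) * M⁻¹ * (δ : PSL(2, ℝ)) * M * (γ₂ : PSL(2, ℝ))⁻¹ =
          (γ₁ : PSL(2, ℝ)) * M⁻¹ * ((δ : PSL(2, ℝ)) * (M * (γ₂ : PSL(2, ℝ))⁻¹)) := by group
      have e2 : (γ₁ : PSL(2, ℝ)) * M⁻¹ * (M * (γ₁ : PSL(2, ℝ))⁻¹) = 1 := by group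
      rw [e1, h2, e2, one_smul]
    have h1 := hgood γ₁ δ γ₂ hfix
    refine Quotient.sound (QuotientGroup.leftRel_apply.mpr ?_)
    refine (hmemS _).mpr ⟨δ, δ.2, ?_⟩
    rw [Subgroup.coe_mul, Subgroup.coe_inv]
    have : (γ₁ : PSL(2, ℝ)) * M⁻¹ * δ * M = (γ₂ : PSL(2, ℝ)) := by
      have := congrArg (fun z => z * (γ₂ : PSL(2, ℝ))) h1
      simpa [mul_assoc] using this
    rw [← this]; group
  have heq : ((fun τ : ℍ => Quotient.mk (MulAction.orbitRel Γ ℍ) (M • τ)) ''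
      (Quotient.mk (MulAction.orbitRel Γ ℍ) ⁻¹' {x})).encard = ENat.card (↥Γ ⧸ S) := by
    rw [← hτ₀, ← hrange τ₀, ← Set.image_univ, hinj.encard_image, Set.encard_univ]
  -- N equals the cardinality of the coset space
  have hNC : (⨆ x ∈ X₀, ((fun τ : ℍ => Quotient.mk (MulAction.orbitRel Γ ℍ) (M • τ)) ''
      (Quotient.mk (MulAction.orbitRel Γ ℍ) ⁻¹' {x})).encard) = ENat.card (↥Γ ⧸ S) := by
    refine le_antisymm (iSup₂_le fun x' _ => hub x') ?_
    exact le_iSup₂_of_le x hxX₀ (le_of_eq heq.symm)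
  have hrel : (Γ ⊓ Subgroup.map (MulAut.conj M⁻¹).toMonoidHom Γ).relIndex Γ =
      Nat.card (↥Γ ⧸ S) := rfl
  rw [hNC, hrel]
  by_cases hfin : Finite (↥Γ ⧸ S)
  · have hC : ENat.card (↥Γ ⧸ S) = (Nat.card (↥Γ ⧸ S) : ℕ∞) := by
      have := Fintype.ofFinite (↥Γ ⧸ S)
      rw [ENat.card_eq_coe_fintype_card, Nat.card_eq_fintype_card]
    have hne : Nat.card (↥Γ ⧸ S) ≠ 0 := Nat.card_ne_zero.mpr ⟨⟨Quotient.mk _ 1⟩, hfin⟩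
    refine ⟨⟨fun _ => hne, fun _ => ?_⟩, fun _ => hC⟩
    rw [hC]; exact ENat.coe_ne_top _
  · have : Infinite (↥Γ ⧸ S) := not_finite_iff_infinite.mp hfin
    have hC : ENat.card (↥Γ ⧸ S) = ⊤ := ENat.card_eq_top_of_infinite
    have h0 : Nat.card (↥Γ ⧸ S) = 0 := Nat.card_eq_zero_of_infinite
    rw [hC, h0]
    exact ⟨⟨fun h => absurd rfl h, fun h => absurd rfl h⟩, fun h => absurd rfl h⟩
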